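/- Let m ≥ 1 be a natural number and define the sequence θ : ℕ → ℝ by θ_1 = 1/m and θ_{k+1} = (√(θ_k^4 + 4 θ_k^2) − θ_k^2)/2 for all k ≥ 1. Then for every k ≥ 1 one has the upper bound θ_k ≤ 2/(k − 1 + 2m). -/
import Mathlib


/-- For the ASBCDS step-size sequence θ with θ₁ = 1/m and
θ_{k+1} = (√(θ_k⁴ + 4θ_k²) − θ_k²)/2 (m ≥ 1), for every k ≥ 1 one has
θ_k ≤ 2/(k − 1 + 2m). -/
theorem asbcds_theta_upper_bound (m : ℕ) (hm : 1 ≤ m) (θ : ℕ → ℝ)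
    (hθ1 : θ 1 = 1 / m)
    (hθrec : ∀ k, 1 ≤ k →
      θ (k + 1) = (Real.sqrt (θ k ^ 4 + 4 * θ k ^ 2) - θ k ^ 2) / 2) :
    ∀ k, 1 ≤ k → θ k ≤ 2 / ((k : ℝ) - 1 + 2 * m) := by
  have hm0 : (1:ℝ) ≤ m := by exact_mod_cast hm
  have key : ∀ k, 1 ≤ k → 0 < θ k ∧ ((k : ℝ) - 1 + 2 * m) / 2 ≤ 1 / θ k := by
    intro k hk
    induction k, hk using Nat.le_induction with
    | base =>
        constructor
        · rw [hθ1]; positivity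
        · rw [hθ1, one_div_one_div]; push_cast; linarith
    | succ k hk ih =>
        obtain ⟨hpos, hub⟩ := ih
        set a := θ k with ha
        have hrec := hθrec k hk
        have hD : (0:ℝ) ≤ a^4 + 4*a^2 := by positivity
        have hsq : Real.sqrt (a^4+4*a^2) ^ 2 = a^4+4*a^2 := Real.sq_sqrt hD
        have hgt : a^2 < Real.sqrt (a^4+4*a^2) := by
          nlinarith [Real.sqrt_nonneg (a^4+4*a^2), hsq, hpos, sq_nonneg a]
        have hxpos : 0 < θ (k+1) := by rw [hrec]; linarith
        have hquad : θ (k+1)^2 + θ (k+1) * a^2 = a^2 := by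
          have h2 : 2 * θ (k+1) + a^2 = Real.sqrt (a^4+4*a^2) := by rw [hrec]; ring
          nlinarith [h2, hsq]
        have hxa : θ (k+1) < a := by
          have hsqlt : θ (k+1)^2 < a^2 := by
            nlinarith [mul_pos hxpos (pow_pos hpos 2)]
          exact lt_of_pow_lt_pow_left₀ 2 hpos.le hsqlt
        refine ⟨hxpos, ?_⟩
        have h1 : 1/a + 1/2 ≤ 1 / θ (k+1) := by
          rw [div_add_div _ _ (ne_of_gt hpos) two_ne_zero,
            div_le_div_iff₀ (by positivity) hxpos]
          nlinarith [mul_nonneg hxpos.le (sub_nonneg.mpr hxa.le),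
            mul_pos hpos hxpos]
        push_cast
        linarith
  intro k hk
  obtain ⟨hp, hb⟩ := key k hk
  have hk1 : (1:ℝ) ≤ k := by exact_mod_cast hk
  have hd : (0:ℝ) < (k : ℝ) - 1 + 2 * m := by linarith
  rw [le_div_iff₀ hd]
  have := (div_le_div_iff₀ two_pos hp).mp hb
  nlinarith
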